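/- Fix m, n, k ∈ ℕ with l := n + k ≤ m, and fix ϑ : Fin l → {0,1} of Hamming weight k. Then the number of pairs (u, v) with u, v : Fin m → {0,1} of Hamming weights n and k respectively, having disjoint supports, and such that listing the union of their supports in increasing order as r_1 < … < r_l, one has ϑ i = 0 ↔ u r_i = 1 (equivalently ϑ i = 1 ↔ v r_i = 1) for all i, equals C(m, n + k). In particular this count does not depend on ϑ. -/

import Mathlib

open Finset

private lemma aux_emb_symm {m l : ℕ} (S : Finset (Fin m)) (hS : S.card = l)
    (x : Fin m) (h : x ∈ S) :
    S.orderEmbOfFin hS ((S.orderIsoOfFin hS).symm ⟨x, h⟩) = x := by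
  rw [← Finset.coe_orderIsoOfFin_apply, OrderIso.apply_symm_apply]

private lemma aux_symm_emb {m l : ℕ} (S : Finset (Fin m)) (hS : S.card = l) (i : Fin l) :
    (S.orderIsoOfFin hS).symm ⟨S.orderEmbOfFin hS i, S.orderEmbOfFin_mem hS i⟩ = i := by
  rw [OrderIso.symm_apply_eq]
  ext
  simp

private def jmap {m l : ℕ} (ϑ : Fin l → Bool) (S : Finset (Fin m)) (hS : S.card = l) :
    (Fin m → Bool) × (Fin m → Bool) :=
  (fun x => if h : x ∈ S then !ϑ ((S.orderIsoOfFin hS).symm ⟨x, h⟩) else false,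
   fun x => if h : x ∈ S then ϑ ((S.orderIsoOfFin hS).symm ⟨x, h⟩) else false)

private lemma jmap_fst_filter {m l : ℕ} (ϑ : Fin l → Bool) (S : Finset (Fin m))
    (hS : S.card = l) :
    univ.filter (fun x => (jmap ϑ S hS).1 x = true)
      = (univ.filter fun i => ϑ i = false).image (S.orderEmbOfFin hS) := by
  ext x
  simp only [mem_filter, mem_univ, true_and, mem_image]
  simp only [jmap]
  constructor
  · intro hx
    by_cases h : x ∈ S
    · rw [dif_pos h] at hx
      exact ⟨(S.orderIsoOfFin hS).symm ⟨x, h⟩, by simpa using hx, aux_emb_symm S hS x h⟩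
    · rw [dif_neg h] at hx; simp at hx
  · rintro ⟨i, hi, rfl⟩
    rw [dif_pos (S.orderEmbOfFin_mem hS i), aux_symm_emb]
    simp [hi]

private lemma jmap_snd_filter {m l : ℕ} (ϑ : Fin l → Bool) (S : Finset (Fin m))
    (hS : S.card = l) :
    univ.filter (fun x => (jmap ϑ S hS).2 x = true)
      = (univ.filter fun i => ϑ i = true).image (S.orderEmbOfFin hS) := by
  ext x
  simp only [mem_filter, mem_univ, true_and, mem_image]
  simp only [jmap]
  constructor
  · intro hx
    by_cases h : x ∈ S
    · rw [dif_pos h] at hx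
      exact ⟨(S.orderIsoOfFin hS).symm ⟨x, h⟩, hx, aux_emb_symm S hS x h⟩
    · rw [dif_neg h] at hx; simp at hx
  · rintro ⟨i, hi, rfl⟩
    rw [dif_pos (S.orderEmbOfFin_mem hS i), aux_symm_emb]
    exact hi

private lemma jmap_mem_iff {m l : ℕ} (ϑ : Fin l → Bool) (S : Finset (Fin m))
    (hS : S.card = l) (x : Fin m) :
    ((jmap ϑ S hS).1 x = true ∨ (jmap ϑ S hS).2 x = true) ↔ x ∈ S := by
  simp only [jmap]
  by_cases h : x ∈ S
  · simp only [dif_pos h, h, iff_true]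
    cases ϑ ((S.orderIsoOfFin hS).symm ⟨x, h⟩) <;> simp
  · simp [dif_neg h, h]

/-- The key counting step for uniform sampling of LCA sifting: the number of
pairs (u,v) of disjoint strings of weights n and k whose union of supports,
enumerated in increasing order by r, satisfies ϑ i = 0 ↔ u (r i) = 1, equals
C(m, n+k), independently of ϑ. -/
theorem stmt_8 (m n k : ℕ) (hlm : n + k ≤ m) (ϑ : Fin (n + k) → Bool)
    (hϑ : (Finset.univ.filter (fun i => ϑ i = true)).card = k) :
    (Finset.univ.filter (fun uv : (Fin m → Bool) × (Fin m → Bool) =>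
        (Finset.univ.filter (fun i => uv.1 i = true)).card = n ∧
        (Finset.univ.filter (fun i => uv.2 i = true)).card = k ∧
        (∀ i, ¬(uv.1 i = true ∧ uv.2 i = true)) ∧
        ∃ r : Fin (n + k) → Fin m, StrictMono r ∧
          (∀ x, (uv.1 x = true ∨ uv.2 x = true) ↔ ∃ i, r i = x) ∧
          (∀ i, ϑ i = false ↔ uv.1 (r i) = true))).card
      = m.choose (n + k) := by
  classical
  have hϑf : (Finset.univ.filter (fun i => ϑ i = false)).card = n := by
    have h1 := Finset.card_filter_add_card_filter_not
      (s := (univ : Finset (Fin (n + k)))) (p := fun i => ϑ i = true)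
    have h2 : (univ.filter fun i => ¬ ϑ i = true) = univ.filter fun i => ϑ i = false := by
      apply Finset.filter_congr; intro i _; cases ϑ i <;> simp
    rw [h2] at h1
    simp only [Finset.card_univ, Fintype.card_fin, hϑ] at h1
    omega
  have hpc : ((univ : Finset (Fin m)).powersetCard (n + k)).card = m.choose (n + k) := by
    simp
  rw [← hpc]
  -- support-union cardinality for any pair in the set
  have hScard : ∀ uv : (Fin m → Bool) × (Fin m → Bool),
      (univ.filter (fun i => uv.1 i = true)).card = n →
      (univ.filter (fun i => uv.2 i = true)).card = k →
      (∀ i, ¬(uv.1 i = true ∧ uv.2 i = true)) →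
      (univ.filter (fun x => uv.1 x = true ∨ uv.2 x = true)).card = n + k := by
    intro uv hu hv hd
    rw [Finset.filter_or, Finset.card_union_of_disjoint, hu, hv]
    rw [Finset.disjoint_left]
    intro x hx1 hx2
    simp only [mem_filter] at hx1 hx2
    exact hd x ⟨hx1.2, hx2.2⟩
  refine Finset.card_bij'
    (fun uv _ => univ.filter (fun x => uv.1 x = true ∨ uv.2 x = true))
    (fun S hS => jmap ϑ S (Finset.mem_powersetCard.mp hS).2) ?_ ?_ ?_ ?_
  · -- maps into powersetCard
    intro uv ha
    simp only [Finset.mem_filter, Finset.mem_univ, true_and] at ha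
    obtain ⟨hu, hv, hd, -⟩ := ha
    exact Finset.mem_powersetCard.mpr ⟨Finset.subset_univ _, hScard uv hu hv hd⟩
  · -- jmap lands in the set
    intro S hS
    have hSc := (Finset.mem_powersetCard.mp hS).2
    simp only [Finset.mem_filter, Finset.mem_univ, true_and]
    refine ⟨?_, ?_, ?_, S.orderEmbOfFin hSc, (S.orderEmbOfFin hSc).strictMono, ?_, ?_⟩
    · rw [jmap_fst_filter,
        Finset.card_image_of_injective _ (S.orderEmbOfFin hSc).injective, hϑf]
    · rw [jmap_snd_filter,
        Finset.card_image_of_injective _ (S.orderEmbOfFin hSc).injective, hϑ]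
    · intro x hx
      obtain ⟨h1, h2⟩ := hx
      simp only [jmap] at h1 h2
      by_cases h : x ∈ S
      · rw [dif_pos h] at h1 h2
        rw [h2] at h1
        simp at h1
      · rw [dif_neg h] at h1
        simp at h1
    · intro x
      rw [jmap_mem_iff]
      constructor
      · intro h
        exact ⟨(S.orderIsoOfFin hSc).symm ⟨x, h⟩, aux_emb_symm S hSc x h⟩
      · rintro ⟨i, rfl⟩
        exact S.orderEmbOfFin_mem hSc i
    · intro i
      simp only [jmap, dif_pos (S.orderEmbOfFin_mem hSc i), aux_symm_emb]
      cases ϑ i <;> simp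
  · -- left inverse : jmap of support union equals uv
    intro uv ha
    simp only [Finset.mem_filter, Finset.mem_univ, true_and] at ha
    obtain ⟨hu, hv, hd, r, hmono, hrange, hϑr⟩ := ha
    set S := univ.filter (fun x => uv.1 x = true ∨ uv.2 x = true) with hSdef
    have hSc : S.card = n + k := hScard uv hu hv hd
    have hmem : ∀ x, x ∈ S ↔ (uv.1 x = true ∨ uv.2 x = true) := by
      intro x; simp [hSdef]
    have hr : r = S.orderEmbOfFin hSc := by
      apply Finset.orderEmbOfFin_unique hSc _ hmono
      intro i
      rw [hmem]
      exact (hrange (r i)).mpr ⟨i, rfl⟩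
    have key : ∀ (x : Fin m) (h : x ∈ S),
        uv.1 x = !ϑ ((S.orderIsoOfFin hSc).symm ⟨x, h⟩) ∧
        uv.2 x = ϑ ((S.orderIsoOfFin hSc).symm ⟨x, h⟩) := by
      intro x h
      obtain ⟨i, hi⟩ := (hrange x).mp ((hmem x).mp h)
      have hidx : (S.orderIsoOfFin hSc).symm ⟨x, h⟩ = i := by
        rw [OrderIso.symm_apply_eq]
        apply Subtype.ext
        rw [Finset.coe_orderIsoOfFin_apply, ← hr]
        exact hi.symm
      rw [hidx]
      have h1 := hϑr i
      rw [hi] at h1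
      have h2 := hd x
      have h3 := (hmem x).mp h
      revert h1 h2 h3
      cases hb0 : ϑ i <;> cases hb1 : uv.1 x <;> cases hb2 : uv.2 x <;> decide
    ext x <;> simp only [jmap]
    · by_cases h : x ∈ S
      · rw [dif_pos h, (key x h).1]
      · rw [dif_neg h]
        rw [hmem] at h
        push_neg at h
        simp [h.1]
    · by_cases h : x ∈ S
      · rw [dif_pos h, (key x h).2]
      · rw [dif_neg h]
        rw [hmem] at h
        push_neg at h
        simp [h.2]
  · -- right inverse : support union of jmap equals S
    intro S hS
    have hSc := (Finset.mem_powersetCard.mp hS).2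
    ext x
    simp only [Finset.mem_filter, Finset.mem_univ, true_and]
    rw [jmap_mem_iff]
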